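/- arXiv:1509.05727 — 9 statements merged into one kernel-verified Lean document; each statement's English description precedes it below -/
import Mathlib

section
/- Let Q be a commutative loop in which every associator lies in the center Z(Q). Then for all a, b, c ∈ Q: (a,b,a) = 1, (a,b,c)·(c,b,a) = 1, and ((a,b,c)·(b,c,a))·(c,a,b) = 1. -/
/-- A commutative loop is given by `mul`, identity `one` and left division `ld`
(with `mul a (ld a b) = b` and left cancellation `ld a (mul a b) = b`;
together with commutativity this gives unique solvability of `a·x = b` and `y·a = b`).
The associator `asc a b c` is the unique element with `(a·b)·c = (a·(b·c))·(a,b,c)`.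
Hypothesis `h_asc_central` says every associator lies in the center. -/
theorem stmt_0 {Q : Type*} (mul : Q → Q → Q) (one : Q) (ld : Q → Q → Q)
    (h_one_mul : ∀ a, mul one a = a)
    (h_mul_one : ∀ a, mul a one = a)
    (h_comm : ∀ a b, mul a b = mul b a)
    (h_mul_ld : ∀ a b, mul a (ld a b) = b)
    (h_ld_mul : ∀ a b, ld a (mul a b) = b)
    (asc : Q → Q → Q → Q)
    (h_asc : ∀ a b c, mul (mul a b) c = mul (mul a (mul b c)) (asc a b c))
    (h_asc_central : ∀ a b c u v,
      mul (asc a b c) u = mul u (asc a b c) ∧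
      mul (mul (asc a b c) u) v = mul (asc a b c) (mul u v) ∧
      mul (mul u (asc a b c)) v = mul u (mul (asc a b c) v) ∧
      mul (mul u v) (asc a b c) = mul u (mul v (asc a b c))) :
    ∀ a b c : Q,
      asc a b a = one ∧
      mul (asc a b c) (asc c b a) = one ∧
      mul (mul (asc a b c) (asc b c a)) (asc c a b) = one := by

  intro a b c
  have cancel : ∀ x t : Q, mul x t = x → t = one := by
    intro x t h
    have h1 := h_ld_mul x t
    rw [h] at h1
    have h2 := h_ld_mul x one
    rw [h_mul_one] at h2
    rw [← h1, h2]
  refine ⟨?_, ?_, ?_⟩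
  · apply cancel (mul a (mul b a))
    have e := h_asc a b a
    rw [h_comm (mul a b) a, h_comm a b] at e
    exact e.symm
  · apply cancel (mul c (mul b a))
    have e1 := h_asc a b c
    rw [h_comm a (mul b c), h_comm b c, h_asc c b a,
      (h_asc_central c b a (mul c (mul b a)) (asc a b c)).2.2.1,
      ] at e1
    rw [(h_asc_central a b c (asc c b a) one).1, ← e1, h_comm (mul a b) c, h_comm a b]
  · apply cancel (mul (mul a b) c)
    have e1 := h_asc a b c
    rw [h_comm a (mul b c), h_asc b c a,
      (h_asc_central b c a (mul b (mul c a)) (asc a b c)).2.2.1,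
      h_comm b (mul c a), h_asc c a b,
      (h_asc_central c a b (mul c (mul a b))
        (mul (asc b c a) (asc a b c))).2.2.1,
      h_comm c (mul a b)] at e1
    rw [h_comm (mul (asc a b c) (asc b c a)) (asc c a b),
      (h_asc_central a b c (asc b c a) one).1]
    exact e1.symm
end

section
/- Let Q be a commutative loop in which every associator lies in the center Z(Q). Then Q satisfies the identity (A) (i.e., Q is automorphic) if and only if (a·b, c, d) = (a,c,d)·(b,c,d) for all a, b, c, d ∈ Q. -/
/-- In a commutative loop of nilpotency class ≤ 2 (all associators central),
identity (A) holds iff `(a·b,c,d) = (a,c,d)·(b,c,d)` for all `a,b,c,d`. -/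
theorem stmt_1 {Q : Type*} (mul : Q → Q → Q) (one : Q) (ld : Q → Q → Q)
    (h_one_mul : ∀ a, mul one a = a)
    (h_mul_one : ∀ a, mul a one = a)
    (h_comm : ∀ a b, mul a b = mul b a)
    (h_mul_ld : ∀ a b, mul a (ld a b) = b)
    (h_ld_mul : ∀ a b, ld a (mul a b) = b)
    (asc : Q → Q → Q → Q)
    (h_asc : ∀ a b c, mul (mul a b) c = mul (mul a (mul b c)) (asc a b c))
    (h_asc_central : ∀ a b c u v,
      mul (asc a b c) u = mul u (asc a b c) ∧
      mul (mul (asc a b c) u) v = mul (asc a b c) (mul u v) ∧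
      mul (mul u (asc a b c)) v = mul u (mul (asc a b c) v) ∧
      mul (mul u v) (asc a b c) = mul u (mul v (asc a b c))) :
    (∀ x y a b, ld (mul y x) (mul y (mul x (mul a b))) =
        mul (ld (mul y x) (mul y (mul x a))) (ld (mul y x) (mul y (mul x b)))) ↔
    (∀ a b c d, asc (mul a b) c d = mul (asc a c d) (asc b c d)) := by
  -- centrality predicate
  set C : Q → Prop := fun z =>
    (∀ u, mul z u = mul u z) ∧
    (∀ u v, mul (mul z u) v = mul z (mul u v)) ∧
    (∀ u v, mul (mul u z) v = mul u (mul z v)) ∧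
    (∀ u v, mul (mul u v) z = mul u (mul v z)) with hCdef
  have hC : ∀ a b c, C (asc a b c) := by
    intro a b c
    exact ⟨fun u => (h_asc_central a b c u u).1,
      fun u v => (h_asc_central a b c u v).2.1,
      fun u v => (h_asc_central a b c u v).2.2.1,
      fun u v => (h_asc_central a b c u v).2.2.2⟩
  have lcan : ∀ a {u v : Q}, mul a u = mul a v → u = v := by
    intro a u v h
    rw [← h_ld_mul a u, h, h_ld_mul]
  have rcan : ∀ a {u v : Q}, mul u a = mul v a → u = v := by
    intro a u v h
    rw [h_comm u a, h_comm v a] at h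
    exact lcan a h
  have one_of : ∀ a w, mul a w = a → w = one := by
    intro a w h
    apply lcan a
    rw [h, h_mul_one]
  have rearr : ∀ {q s : Q}, C q → C s → ∀ p r,
      mul (mul p q) (mul r s) = mul (mul p r) (mul q s) := by
    intro q s hq hs p r
    calc mul (mul p q) (mul r s) = mul (mul (mul p q) r) s := (hs.2.2.2 (mul p q) r).symm
      _ = mul (mul p (mul q r)) s := by rw [hq.2.2.1 p r]
      _ = mul (mul p (mul r q)) s := by rw [hq.1 r]
      _ = mul (mul (mul p r) q) s := by rw [hq.2.2.2 p r]
      _ = mul (mul p r) (mul q s) := hq.2.2.1 (mul p r) s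
  -- associator inversion: (a,b,c)·(c,b,a) = 1
  have inv_asc : ∀ a b c, mul (asc a b c) (asc c b a) = one := by
    intro a b c
    apply one_of (mul a (mul b c))
    have h1 : mul a (mul b c) =
        mul (mul (mul a (mul b c)) (asc a b c)) (asc c b a) := by
      have h2 := h_asc c b a
      rw [h_comm (mul c b) a, h_comm c b] at h2
      rw [h_comm c (mul b a), h_comm b a, h_asc a b c] at h2
      exact h2
    rw [(hC a b c).2.2.1 (mul a (mul b c)) (asc c b a)] at h1
    exact h1.symm
  -- key: e(t) · (y,x,t) = t where e(t) = (yx)\(y(xt))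
  have asc_ld : ∀ y x t,
      mul (ld (mul y x) (mul y (mul x t))) (asc y x t) = t := by
    intro y x t
    apply lcan (mul y x)
    calc mul (mul y x) (mul (ld (mul y x) (mul y (mul x t))) (asc y x t))
        = mul (mul (mul y x) (ld (mul y x) (mul y (mul x t)))) (asc y x t) :=
          ((hC y x t).2.2.2 (mul y x) _).symm
      _ = mul (mul y (mul x t)) (asc y x t) := by rw [h_mul_ld]
      _ = mul (mul y x) t := (h_asc y x t).symm
  -- combination: (e(a)·e(b))·((y,x,a)·(y,x,b)) = a·b
  have comb : ∀ y x a b,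
      mul (mul (ld (mul y x) (mul y (mul x a))) (ld (mul y x) (mul y (mul x b))))
        (mul (asc y x a) (asc y x b)) = mul a b := by
    intro y x a b
    calc mul (mul (ld (mul y x) (mul y (mul x a))) (ld (mul y x) (mul y (mul x b))))
          (mul (asc y x a) (asc y x b))
        = mul (mul (ld (mul y x) (mul y (mul x a))) (asc y x a))
            (mul (ld (mul y x) (mul y (mul x b))) (asc y x b)) :=
          (rearr (hC y x a) (hC y x b) _ _).symm
      _ = mul a b := by rw [asc_ld, asc_ld]
  constructor
  · -- (A) → additivity in the first argument
    intro hA a b c d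
    -- first: additivity in the third argument
    have p3 : ∀ y x a b, asc y x (mul a b) = mul (asc y x a) (asc y x b) := by
      intro y x a b
      have h1 := comb y x a b
      rw [← hA x y a b] at h1
      have h2 := (asc_ld y x (mul a b)).trans h1.symm
      exact lcan _ h2
    have h1 : mul (asc (mul a b) c d) (mul (asc d c a) (asc d c b)) = one := by
      rw [← p3 d c a b]; exact inv_asc (mul a b) c d
    have h2 : mul (mul (asc a c d) (asc b c d)) (mul (asc d c a) (asc d c b)) = one := by
      rw [rearr (hC b c d) (hC d c b), inv_asc a c d, inv_asc b c d, h_one_mul]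
    exact rcan _ (h1.trans h2.symm)
  · -- additivity in the first argument → (A)
    intro hP x y a b
    -- additivity in the third argument
    have p3 : asc y x (mul a b) = mul (asc y x a) (asc y x b) := by
      have h1 : mul (mul (asc a x y) (asc b x y)) (asc y x (mul a b)) = one := by
        rw [← hP a b x y]; exact inv_asc (mul a b) x y
      have h2 : mul (mul (asc a x y) (asc b x y)) (mul (asc y x a) (asc y x b)) = one := by
        rw [rearr (hC b x y) (hC y x b), inv_asc a x y, inv_asc b x y, h_one_mul]
      exact lcan _ (h1.trans h2.symm)
    have h1 := comb y x a b
    have h2 := asc_ld y x (mul a b)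
    rw [p3] at h2
    exact rcan _ (h2.trans h1.symm)
end

section
/- Let Q be a commutative loop satisfying identity (A) in which every associator lies in the center Z(Q) (i.e., a commutative automorphic loop of nilpotency class at most two). Then for all a, b, c, d ∈ Q: (a·b, c, d) = (a,c,d)·(b,c,d); (a, b, c·d) = (a,b,c)·(a,b,d); and (a, b·c, d) = ((a,d,b)·(a,d,c))·((b,a,d)·(c,a,d)). -/
/-- In a commutative automorphic loop of nilpotency class ≤ 2 (identity (A) holds,
all associators central), the associator is linear in each argument as stated. -/
theorem stmt_2 {Q : Type*} (mul : Q → Q → Q) (one : Q) (ld : Q → Q → Q)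
    (h_one_mul : ∀ a, mul one a = a)
    (h_mul_one : ∀ a, mul a one = a)
    (h_comm : ∀ a b, mul a b = mul b a)
    (h_mul_ld : ∀ a b, mul a (ld a b) = b)
    (h_ld_mul : ∀ a b, ld a (mul a b) = b)
    (h_A : ∀ x y a b, ld (mul y x) (mul y (mul x (mul a b))) =
        mul (ld (mul y x) (mul y (mul x a))) (ld (mul y x) (mul y (mul x b))))
    (asc : Q → Q → Q → Q)
    (h_asc : ∀ a b c, mul (mul a b) c = mul (mul a (mul b c)) (asc a b c))
    (h_asc_central : ∀ a b c u v,
      mul (asc a b c) u = mul u (asc a b c) ∧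
      mul (mul (asc a b c) u) v = mul (asc a b c) (mul u v) ∧
      mul (mul u (asc a b c)) v = mul u (mul (asc a b c) v) ∧
      mul (mul u v) (asc a b c) = mul u (mul v (asc a b c))) :
    ∀ a b c d : Q,
      asc (mul a b) c d = mul (asc a c d) (asc b c d) ∧
      asc a b (mul c d) = mul (asc a b c) (asc a b d) ∧
      asc a (mul b c) d = mul (mul (asc a d b) (asc a d c)) (mul (asc b a d) (asc c a d)) := by
  -- left cancellation
  have cancel : ∀ w x y : Q, mul w x = mul w y → x = y := by
    intro w x y h
    have := congrArg (ld w) h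
    rwa [h_ld_mul, h_ld_mul] at this
  -- centrality clauses
  have c2 : ∀ a b c u v, mul (mul (asc a b c) u) v = mul (asc a b c) (mul u v) :=
    fun a b c u v => (h_asc_central a b c u v).2.1
  have c3 : ∀ a b c u v, mul (mul u (asc a b c)) v = mul u (mul (asc a b c) v) :=
    fun a b c u v => (h_asc_central a b c u v).2.2.1
  have c4 : ∀ a b c u v, mul (mul u v) (asc a b c) = mul u (mul v (asc a b c)) :=
    fun a b c u v => (h_asc_central a b c u v).2.2.2
  -- G2: linearity in the third argument (from identity (A))
  have G2 : ∀ y x a b, asc y x (mul a b) = mul (asc y x a) (asc y x b) := by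
    intro y x a b
    have hE : ∀ c, c = mul (ld (mul y x) (mul y (mul x c))) (asc y x c) := by
      intro c
      apply cancel (mul y x)
      rw [← c4, h_mul_ld]
      exact h_asc y x c
    have h1 : mul a b =
        mul (ld (mul y x) (mul y (mul x a)))
          (mul (ld (mul y x) (mul y (mul x b))) (asc y x (mul a b))) := by
      rw [← c4, ← h_A]
      exact hE (mul a b)
    have h2 : mul a b =
        mul (ld (mul y x) (mul y (mul x a)))
          (mul (ld (mul y x) (mul y (mul x b))) (mul (asc y x a) (asc y x b))) := by
      conv_lhs => rw [hE a, hE b]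
      rw [c3, ← c2, h_comm (asc y x a) (ld (mul y x) (mul y (mul x b))), c3]
    exact cancel _ _ _ (cancel _ _ _ (h1.symm.trans h2))
  -- S: asc a b c * asc c a b = asc a c b
  have S : ∀ a b c, mul (asc a b c) (asc c a b) = asc a c b := by
    intro a b c
    apply cancel (mul a (mul b c))
    calc mul (mul a (mul b c)) (mul (asc a b c) (asc c a b))
        = mul (mul (mul a (mul b c)) (asc a b c)) (asc c a b) := (c3 a b c _ _).symm
      _ = mul (mul (mul a b) c) (asc c a b) := by rw [← h_asc]
      _ = mul (mul c (mul a b)) (asc c a b) := by rw [h_comm (mul a b) c]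
      _ = mul (mul c a) b := by rw [← h_asc]
      _ = mul (mul a c) b := by rw [h_comm c a]
      _ = mul (mul a (mul c b)) (asc a c b) := h_asc a c b
      _ = mul (mul a (mul b c)) (asc a c b) := by rw [h_comm c b]
  -- T: asc a b c = asc a c b * asc b a c
  have T : ∀ a b c, asc a b c = mul (asc a c b) (asc b a c) := by
    intro a b c
    apply cancel (mul a (mul b c))
    calc mul (mul a (mul b c)) (asc a b c)
        = mul (mul a b) c := (h_asc a b c).symm
      _ = mul (mul b a) c := by rw [h_comm a b]
      _ = mul (mul b (mul a c)) (asc b a c) := h_asc b a c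
      _ = mul (mul (mul a c) b) (asc b a c) := by rw [h_comm b (mul a c)]
      _ = mul (mul (mul a (mul c b)) (asc a c b)) (asc b a c) := by rw [h_asc a c b]
      _ = mul (mul (mul a (mul b c)) (asc a c b)) (asc b a c) := by rw [h_comm c b]
      _ = mul (mul a (mul b c)) (mul (asc a c b) (asc b a c)) := c3 a c b _ _
  -- R1: asc x m y * asc y m x = one
  have R1 : ∀ x m y, mul (asc x m y) (asc y m x) = one := by
    intro x m y
    -- from T m y x? We derived: asc a b c = (asc a b c)·(asc c a b · asc b a c)
    -- use a := m, b := y, c := x? Need pattern asc c a b = asc x m y, asc b a c = asc y m x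
    -- so c = x, a = m, b = y.
    apply cancel (asc m y x)
    rw [h_mul_one]
    symm
    calc asc m y x = mul (asc m x y) (asc y m x) := T m y x
      _ = mul (mul (asc m y x) (asc x m y)) (asc y m x) := by rw [S m y x]
      _ = mul (asc m y x) (mul (asc x m y) (asc y m x)) := c2 m y x _ _
  -- right cancellation
  have cancelR : ∀ w x y : Q, mul x w = mul y w → x = y := by
    intro w x y h
    apply cancel w
    rw [h_comm w x, h_comm w y]; exact h
  -- G1: linearity in the first argument
  have G1 : ∀ a b c d, asc (mul a b) c d = mul (asc a c d) (asc b c d) := by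
    intro a b c d
    apply cancelR (asc d c (mul a b))
    rw [R1 (mul a b) c d]
    rw [G2 d c a b]
    symm
    calc mul (mul (asc a c d) (asc b c d)) (mul (asc d c a) (asc d c b))
        = mul (asc a c d) (mul (asc b c d) (mul (asc d c a) (asc d c b))) :=
          c2 a c d _ _
      _ = mul (asc a c d) (mul (mul (asc b c d) (asc d c a)) (asc d c b)) := by
          rw [c2 b c d]
      _ = mul (asc a c d) (mul (mul (asc d c a) (asc b c d)) (asc d c b)) := by
          rw [h_comm (asc b c d) (asc d c a)]
      _ = mul (asc a c d) (mul (asc d c a) (mul (asc b c d) (asc d c b))) := by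
          rw [c2 d c a]
      _ = mul (asc a c d) (mul (asc d c a) one) := by rw [R1 b c d]
      _ = mul (asc a c d) (asc d c a) := by rw [h_mul_one]
      _ = one := R1 a c d
  intro a b c d
  refine ⟨G1 a b c d, G2 a b c d, ?_⟩
  calc asc a (mul b c) d
      = mul (asc a d (mul b c)) (asc (mul b c) a d) := T a (mul b c) d
    _ = mul (mul (asc a d b) (asc a d c)) (mul (asc b a d) (asc c a d)) := by
        rw [G2 a d b c, G1 b c a d]
end

section
/- Let Q be a commutative loop satisfying identity (A) in which every associator lies in the center Z(Q). Then for all a, b, c, d ∈ Q: (a·b)·(c·d) = ((((a·c)·(b·d))·(a·c, b, d))·(b,a,c))·(d, c, a·b). -/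
/-- In a commutative automorphic loop of nilpotency class ≤ 2:
`(a·b)·(c·d) = ((((a·c)·(b·d))·(a·c,b,d))·(b,a,c))·(d,c,a·b)`. -/
theorem stmt_3 {Q : Type*} (mul : Q → Q → Q) (one : Q) (ld : Q → Q → Q)
    (h_one_mul : ∀ a, mul one a = a)
    (h_mul_one : ∀ a, mul a one = a)
    (h_comm : ∀ a b, mul a b = mul b a)
    (h_mul_ld : ∀ a b, mul a (ld a b) = b)
    (h_ld_mul : ∀ a b, ld a (mul a b) = b)
    (h_A : ∀ x y a b, ld (mul y x) (mul y (mul x (mul a b))) =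
        mul (ld (mul y x) (mul y (mul x a))) (ld (mul y x) (mul y (mul x b))))
    (asc : Q → Q → Q → Q)
    (h_asc : ∀ a b c, mul (mul a b) c = mul (mul a (mul b c)) (asc a b c))
    (h_asc_central : ∀ a b c u v,
      mul (asc a b c) u = mul u (asc a b c) ∧
      mul (mul (asc a b c) u) v = mul (asc a b c) (mul u v) ∧
      mul (mul u (asc a b c)) v = mul u (mul (asc a b c) v) ∧
      mul (mul u v) (asc a b c) = mul u (mul v (asc a b c))) :
    ∀ a b c d : Q,
      mul (mul a b) (mul c d) =
        mul (mul (mul (mul (mul a c) (mul b d)) (asc (mul a c) b d)) (asc b a c))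
            (asc d c (mul a b)) := by
  have cancel : ∀ m u v : Q, mul m u = mul m v → u = v := by
    intro m u v h
    have h2 := congrArg (ld m) h
    rwa [h_ld_mul, h_ld_mul] at h2
  have a3' : ∀ p q r (v u : Q), mul (mul u (asc p q r)) v = mul u (mul (asc p q r) v) :=
    fun p q r v u => (h_asc_central p q r u v).2.2.1
  have a4 : ∀ p q r (u v : Q), mul (mul u v) (asc p q r) = mul u (mul v (asc p q r)) :=
    fun p q r u v => (h_asc_central p q r u v).2.2.2
  have swap : ∀ p q r (w M : Q), mul (mul M (asc p q r)) w = mul (mul M w) (asc p q r) := by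
    intro p q r w M
    rw [(h_asc_central p q r M w).2.2.1, (h_asc_central p q r w w).1,
      ← (h_asc_central p q r M w).2.2.2]
  have R : ∀ x y z, mul (asc x y z) (asc z x y) = asc x z y := by
    intro x y z
    refine cancel (mul x (mul y z)) _ _ ?_
    rw [← a3' x y z (asc z x y), ← h_asc x y z, h_comm (mul x y) z, ← h_asc z x y,
      h_comm z x, h_asc x z y, h_comm z y]
  have pair : ∀ x y z, mul (asc x y z) (asc z y x) = one := by
    intro x y z
    refine cancel (asc y z x) _ _ ?_
    rw [h_mul_one, ← a3' x y z (asc z y x), R y z x, R y x z]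
  have pairabsorb : ∀ x y z (M : Q), mul (mul M (asc x y z)) (asc z y x) = M := by
    intro x y z M
    rw [(h_asc_central x y z M (asc z y x)).2.2.1, pair x y z, h_mul_one]
  have lin3 : ∀ x y u v, asc x y (mul u v) = mul (asc x y u) (asc x y v) := by
    intro x y u v
    have ft : ∀ w, mul (ld (mul x y) (mul x (mul y w))) (asc x y w) = w := by
      intro w
      refine cancel (mul x y) _ _ ?_
      rw [← a4 x y w (mul x y) (ld (mul x y) (mul x (mul y w))), h_mul_ld, ← h_asc x y w]
    have hA := h_A y x u v
    refine cancel (mul (ld (mul x y) (mul x (mul y u))) (ld (mul x y) (mul x (mul y v)))) _ _ ?_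
    conv_lhs => rw [← hA]
    rw [ft (mul u v)]
    rw [← a3' x y u (asc x y v)]
    rw [a4 x y u (ld (mul x y) (mul x (mul y u))) (ld (mul x y) (mul x (mul y v)))]
    rw [← (h_asc_central x y u (ld (mul x y) (mul x (mul y v))) one).1]
    rw [← a3' x y u (ld (mul x y) (mul x (mul y v)))]
    rw [a4 x y v (mul (ld (mul x y) (mul x (mul y u))) (asc x y u))
      (ld (mul x y) (mul x (mul y v)))]
    rw [ft u, ft v]
  have lin1 : ∀ u v x y, asc (mul u v) x y = mul (asc u x y) (asc v x y) := by
    intro u v x y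
    refine cancel (asc y x (mul u v)) _ _ ?_
    have h1 : mul (asc y x (mul u v)) (asc (mul u v) x y) = one := by
      rw [(h_asc_central y x (mul u v) (asc (mul u v) x y) one).1]
      exact pair (mul u v) x y
    rw [h1]
    rw [lin3 y x u v]
    rw [← a3' u x y (asc v x y)]
    rw [a4 u x y (asc y x u) (asc y x v)]
    rw [← (h_asc_central u x y (asc y x v) one).1]
    rw [← a3' u x y (asc y x v)]
    rw [a4 v x y (mul (asc y x u) (asc u x y)) (asc y x v)]
    rw [pair y x u, pair y x v, h_one_mul]
  intro a b c d
  have hcb : mul (mul c (mul b d)) (asc c b d) = mul (mul b (mul c d)) (asc b c d) := by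
    rw [← h_asc c b d, ← h_asc b c d, h_comm c b]
  have step2 : mul c (mul b d) = mul (mul (mul b (mul c d)) (asc b c d)) (asc d b c) := by
    rw [← hcb]
    rw [(h_asc_central c b d (mul c (mul b d)) (asc d b c)).2.2.1]
    rw [pair c b d, h_mul_one]
  rw [h_asc a b (mul c d)]
  rw [lin3 a b c d]
  rw [h_asc a c (mul b d)]
  rw [lin3 a c b d]
  rw [lin1 a c b d]
  rw [lin3 d c a b]
  rw [step2]
  rw [← a4 d b c a (mul (mul b (mul c d)) (asc b c d))]
  rw [← a4 b c d a (mul b (mul c d))]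
  rw [← a3' a c b (asc a c d)]
  rw [← a3' a b d (asc c b d)]
  rw [← a3' d c a (asc d c b)]
  rw [swap a b d (asc c b d)]
  rw [swap a c d (asc c b d)]
  rw [swap a c b (asc c b d)]
  rw [pairabsorb d b c]
  rw [swap d c a (asc d c b)]
  rw [swap b a c (asc d c b)]
  rw [swap a b d (asc d c b)]
  rw [swap a c d (asc d c b)]
  rw [swap a c b (asc d c b)]
  rw [pairabsorb b c d]
  rw [swap b a c (asc d c a)]
  rw [swap a b d (asc d c a)]
  rw [pairabsorb a c d]
  rw [swap a b d (asc b a c)]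
  rw [a3' a c b (asc b a c)]
  rw [R a c b]
  rw [a3' a b c (asc a b d)]
end

section
/- Let Q be a commutative loop satisfying identity (A) in which every associator lies in the center Z(Q). Then for all a, b ∈ Q and all natural numbers i1, i2, j1, j2, k1, k2: (a^{i1}·b^{i2}, a^{j1}·b^{j2}, a^{k1}·b^{k2}) · ((a,a,b)^{j1·i2·k1} · (a,b,b)^{j2·i2·k1}) = (a,a,b)^{j1·i1·k2} · (a,b,b)^{j2·i1·k2}. (This is the identity (a^{i1}b^{i2}, a^{j1}b^{j2}, a^{k1}b^{k2}) = (a,a,b)^{j1(i1k2−i2k1)} (a,b,b)^{j2(i1k2−i2k1)} with negative exponents moved to the other side.) -/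
/-- Powers in a loop: `a^0 = 1`, `a^(n+1) = a·(a^n)`. -/
def lpow {Q : Type*} (mul : Q → Q → Q) (one : Q) (a : Q) : ℕ → Q
  | 0 => one
  | n + 1 => mul a (lpow mul one a n)

namespace Stmt4

variable {Q : Type*} (mul : Q → Q → Q) (one : Q) (ld : Q → Q → Q)

def IsC (z : Q) : Prop := ∀ u v, mul (mul z u) v = mul z (mul u v)

abbrev Cen : Type _ := {z : Q // IsC mul z}

variable (h_one_mul : ∀ a, mul one a = a)
variable (h_mul_one : ∀ a, mul a one = a)
variable (h_comm : ∀ a b, mul a b = mul b a)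
variable (h_mul_ld : ∀ a b, mul a (ld a b) = b)
variable (h_ld_mul : ∀ a b, ld a (mul a b) = b)

include h_ld_mul in
theorem cancel {x u v : Q} (h : mul x u = mul x v) : u = v := by
  have h1 := h_ld_mul x u
  rw [h, h_ld_mul] at h1
  exact h1.symm

include h_comm in
theorem swap {z : Q} (hz : IsC mul z) (u v : Q) :
    mul (mul u z) v = mul u (mul z v) := by
  rw [h_comm u z, hz u v, h_comm u (mul z v), hz v u, h_comm v u]

include h_comm in
theorem rightc {z : Q} (hz : IsC mul z) (u v : Q) :
    mul (mul u v) z = mul u (mul v z) := by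
  rw [h_comm (mul u v) z, ← hz u v, h_comm z u, swap (mul := mul) (h_comm := h_comm) hz u v, h_comm z v]

theorem c_mul {z1 z2 : Q} (h1 : IsC mul z1) (h2 : IsC mul z2) : IsC mul (mul z1 z2) := by
  intro u v
  rw [h1 z2 u, h1 (mul z2 u) v, h2 u v, h1 z2 (mul u v)]

include h_one_mul in
theorem c_one : IsC mul one := fun u v => by rw [h_one_mul, h_one_mul]

include h_one_mul h_mul_ld h_ld_mul in
theorem c_inv {z : Q} (hz : IsC mul z) : IsC mul (ld z one) := by
  intro u v
  apply cancel (mul := mul) (ld := ld) (h_ld_mul := h_ld_mul) (x := z)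
  rw [← hz (mul (ld z one) u) v, ← hz (ld z one) u, h_mul_ld, h_one_mul,
      ← hz (ld z one) (mul u v), h_mul_ld, h_one_mul]

include h_comm h_mul_ld h_ld_mul in
theorem ld_central {z : Q} (hz : IsC mul z) (c m : Q) :
    ld c (mul m z) = mul (ld c m) z := by
  have h1 : mul c (mul (ld c m) z) = mul m z := by
    rw [← rightc (mul := mul) (h_comm := h_comm) hz c (ld c m), h_mul_ld]
  rw [← h1, h_ld_mul]

include h_comm in
theorem movez {z : Q} (hz : IsC mul z) (x d : Q) :
    mul (mul x z) d = mul (mul x d) z := by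
  rw [swap (mul := mul) (h_comm := h_comm) hz x d, h_comm z d,
      ← rightc (mul := mul) (h_comm := h_comm) hz x d]

include h_comm in
theorem rearr {z1 z2 : Q} (h1 : IsC mul z1) (h2 : IsC mul z2) (p q : Q) :
    mul (mul p z1) (mul q z2) = mul (mul p q) (mul z1 z2) := by
  rw [swap (mul := mul) (h_comm := h_comm) h1 p (mul q z2), ← h1 q z2, h_comm z1 q,
      rightc (mul := mul) (h_comm := h_comm) (c_mul mul h1 h2) p q,
      ← swap (mul := mul) (h_comm := h_comm) h1 q z2]

variable (asc : Q → Q → Q → Q)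
variable (h_asc : ∀ a b c, mul (mul a b) c = mul (mul a (mul b c)) (asc a b c))
variable (h_A : ∀ x y a b, ld (mul y x) (mul y (mul x (mul a b))) =
    mul (ld (mul y x) (mul y (mul x a))) (ld (mul y x) (mul y (mul x b))))

include h_comm h_mul_ld h_ld_mul h_asc in
theorem fstar (hc : ∀ a b c, IsC mul (asc a b c)) (y x t : Q) :
    mul (ld (mul y x) (mul y (mul x t))) (asc y x t) = t := by
  rw [← ld_central (mul := mul) (ld := ld) (h_comm := h_comm) (h_mul_ld := h_mul_ld)
        (h_ld_mul := h_ld_mul) (hc y x t) (mul y x) (mul y (mul x t)),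
      ← h_asc, h_ld_mul]

include h_comm h_mul_ld h_ld_mul h_asc h_A in
theorem L3 (hc : ∀ a b c, IsC mul (asc a b c)) (y x s t : Q) :
    asc y x (mul s t) = mul (asc y x s) (asc y x t) := by
  apply cancel (mul := mul) (ld := ld) (h_ld_mul := h_ld_mul)
    (x := ld (mul y x) (mul y (mul x (mul s t))))
  rw [fstar (mul := mul) (ld := ld) (h_comm := h_comm) (h_mul_ld := h_mul_ld)
        (h_ld_mul := h_ld_mul) (asc := asc) (h_asc := h_asc) hc y x (mul s t),
      h_A x y s t,
      ← rearr (mul := mul) (h_comm := h_comm) (hc y x s) (hc y x t)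
        (ld (mul y x) (mul y (mul x s))) (ld (mul y x) (mul y (mul x t))),
      fstar (mul := mul) (ld := ld) (h_comm := h_comm) (h_mul_ld := h_mul_ld)
        (h_ld_mul := h_ld_mul) (asc := asc) (h_asc := h_asc) hc y x s,
      fstar (mul := mul) (ld := ld) (h_comm := h_comm) (h_mul_ld := h_mul_ld)
        (h_ld_mul := h_ld_mul) (asc := asc) (h_asc := h_asc) hc y x t]

include h_comm h_mul_one h_ld_mul h_asc in
theorem flipQ (hc : ∀ a b c, IsC mul (asc a b c)) (a b c : Q) :
    mul (asc a b c) (asc c b a) = one := by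
  apply cancel (mul := mul) (ld := ld) (h_ld_mul := h_ld_mul) (x := mul a (mul b c))
  rw [h_mul_one, ← swap (mul := mul) (h_comm := h_comm) (hc a b c) (mul a (mul b c)) (asc c b a),
      ← h_asc a b c]
  have h1 := h_asc c b a
  rw [h_comm c b, h_comm (mul b c) a, h_comm b a, h_comm c (mul a b)] at h1
  exact h1.symm

include h_mul_one h_ld_mul h_asc in
theorem asc_one3 (a b : Q) : asc a b one = one := by
  have h1 := h_asc a b one
  rw [h_mul_one, h_mul_one] at h1
  have h2 : mul (mul a b) one = mul (mul a b) (asc a b one) := by rw [h_mul_one]; exact h1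
  exact (cancel (mul := mul) (ld := ld) (h_ld_mul := h_ld_mul) h2).symm

include h_one_mul h_mul_one h_ld_mul h_asc in
theorem asc_one1 (b c : Q) : asc one b c = one := by
  have h1 := h_asc one b c
  rw [h_one_mul, h_one_mul] at h1
  have h2 : mul (mul b c) one = mul (mul b c) (asc one b c) := by rw [h_mul_one]; exact h1
  exact (cancel (mul := mul) (ld := ld) (h_ld_mul := h_ld_mul) h2).symm

include h_one_mul h_mul_one h_ld_mul h_asc in
theorem asc_one2 (a c : Q) : asc a one c = one := by
  have h1 := h_asc a one c
  rw [h_mul_one, h_one_mul] at h1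
  have h2 : mul (mul a c) one = mul (mul a c) (asc a one c) := by rw [h_mul_one]; exact h1
  exact (cancel (mul := mul) (ld := ld) (h_ld_mul := h_ld_mul) h2).symm

include h_comm h_mul_one h_ld_mul h_asc in
theorem asc_xyx (x y : Q) : asc x y x = one := by
  have h1 := h_asc x y x
  rw [h_comm y x, h_comm (mul x y) x] at h1
  have h2 : mul (mul x (mul x y)) one = mul (mul x (mul x y)) (asc x y x) := by
    rw [h_mul_one]; exact h1
  exact (cancel (mul := mul) (ld := ld) (h_ld_mul := h_ld_mul) h2).symm

include h_comm h_ld_mul h_asc in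
theorem co (hc : ∀ a b c, IsC mul (asc a b c)) (a b c d : Q) :
    mul (mul (asc b c d) (asc a (mul b c) d)) (asc a b c) =
      mul (asc a b (mul c d)) (asc (mul a b) c d) := by
  have path1 : mul (mul (mul a b) c) d =
      mul (mul a (mul b (mul c d)))
        (mul (mul (asc b c d) (asc a (mul b c) d)) (asc a b c)) := by
    rw [h_asc a b c,
        movez (mul := mul) (h_comm := h_comm) (hc a b c) (mul a (mul b c)) d,
        h_asc a (mul b c) d, h_asc b c d,
        ← rightc (mul := mul) (h_comm := h_comm) (hc b c d) a (mul b (mul c d)),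
        swap (mul := mul) (h_comm := h_comm) (hc b c d) (mul a (mul b (mul c d))) (asc a (mul b c) d),
        swap (mul := mul) (h_comm := h_comm) (c_mul mul (hc b c d) (hc a (mul b c) d))
          (mul a (mul b (mul c d))) (asc a b c)]
  have path2 : mul (mul (mul a b) c) d =
      mul (mul a (mul b (mul c d)))
        (mul (asc a b (mul c d)) (asc (mul a b) c d)) := by
    rw [h_asc (mul a b) c d, h_asc a b (mul c d),
        swap (mul := mul) (h_comm := h_comm) (hc a b (mul c d)) (mul a (mul b (mul c d)))
          (asc (mul a b) c d)]
  apply cancel (mul := mul) (ld := ld) (h_ld_mul := h_ld_mul) (x := mul a (mul b (mul c d)))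
  rw [← path1, ← path2]

include h_one_mul h_mul_one h_comm h_mul_ld h_ld_mul in
def cenCommGroup : CommGroup (Cen mul) where
  mul g h := ⟨mul g.1 h.1, c_mul mul g.2 h.2⟩
  one := ⟨one, c_one mul one h_one_mul⟩
  inv g := ⟨ld g.1 one, c_inv mul one ld h_one_mul h_mul_ld h_ld_mul g.2⟩
  mul_assoc g h k := Subtype.ext (g.2 h.1 k.1)
  one_mul g := Subtype.ext (h_one_mul g.1)
  mul_one g := Subtype.ext (h_mul_one g.1)
  inv_mul_cancel g := Subtype.ext (by
    show mul (ld g.1 one) g.1 = one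
    rw [h_comm]; exact h_mul_ld g.1 one)
  mul_comm g h := Subtype.ext (h_comm g.1 h.1)

theorem final_group {G : Type*} [CommGroup G] (A B : G) (i1 i2 j1 j2 k1 k2 : ℕ) :
    (((1:G)^k1 * A^k2)^j1 * ((1:G)^k1 * B^k2)^j2)^i1 *
      ((A⁻¹^k1 * (1:G)^k2)^j1 * (B⁻¹^k1 * (1:G)^k2)^j2)^i2 *
      (A^(j1*i2*k1) * B^(j2*i2*k1)) =
      A^(j1*i1*k2) * B^(j2*i1*k2) := by
  simp only [one_pow, one_mul, mul_one, mul_pow, ← pow_mul, inv_pow]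
  rw [show k2*j1*i1 = j1*i1*k2 by ring, show k2*j2*i1 = j2*i1*k2 by ring,
      show k1*j1*i2 = j1*i2*k1 by ring, show k1*j2*i2 = j2*i2*k1 by ring,
      mul_assoc, ← mul_inv, inv_mul_cancel, mul_one]

end Stmt4

/-- In a commutative automorphic loop of nilpotency class ≤ 2:
`(a^{i1}b^{i2}, a^{j1}b^{j2}, a^{k1}b^{k2}) · ((a,a,b)^{j1·i2·k1}·(a,b,b)^{j2·i2·k1})
  = (a,a,b)^{j1·i1·k2}·(a,b,b)^{j2·i1·k2}`. -/
theorem stmt_4 {Q : Type*} (mul : Q → Q → Q) (one : Q) (ld : Q → Q → Q)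
    (h_one_mul : ∀ a, mul one a = a)
    (h_mul_one : ∀ a, mul a one = a)
    (h_comm : ∀ a b, mul a b = mul b a)
    (h_mul_ld : ∀ a b, mul a (ld a b) = b)
    (h_ld_mul : ∀ a b, ld a (mul a b) = b)
    (h_A : ∀ x y a b, ld (mul y x) (mul y (mul x (mul a b))) =
        mul (ld (mul y x) (mul y (mul x a))) (ld (mul y x) (mul y (mul x b))))
    (asc : Q → Q → Q → Q)
    (h_asc : ∀ a b c, mul (mul a b) c = mul (mul a (mul b c)) (asc a b c))
    (h_asc_central : ∀ a b c u v,
      mul (asc a b c) u = mul u (asc a b c) ∧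
      mul (mul (asc a b c) u) v = mul (asc a b c) (mul u v) ∧
      mul (mul u (asc a b c)) v = mul u (mul (asc a b c) v) ∧
      mul (mul u v) (asc a b c) = mul u (mul v (asc a b c))) :
    ∀ (a b : Q) (i1 i2 j1 j2 k1 k2 : ℕ),
      mul (asc (mul (lpow mul one a i1) (lpow mul one b i2))
               (mul (lpow mul one a j1) (lpow mul one b j2))
               (mul (lpow mul one a k1) (lpow mul one b k2)))
          (mul (lpow mul one (asc a a b) (j1 * i2 * k1))
               (lpow mul one (asc a b b) (j2 * i2 * k1)))
      = mul (lpow mul one (asc a a b) (j1 * i1 * k2))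
            (lpow mul one (asc a b b) (j2 * i1 * k2)) := by
  intro a b i1 i2 j1 j2 k1 k2
  have hc : ∀ x y z, Stmt4.IsC mul (asc x y z) := fun x y z u v => (h_asc_central x y z u v).2.1
  letI : CommGroup (Stmt4.Cen mul) :=
    Stmt4.cenCommGroup mul one ld h_one_mul h_mul_one h_comm h_mul_ld h_ld_mul
  let A' : Q → Q → Q → Stmt4.Cen mul := fun x y z => ⟨asc x y z, hc x y z⟩
  have val_mul : ∀ g h : Stmt4.Cen mul, (g * h).1 = mul g.1 h.1 := fun _ _ => rfl
  have val_pow : ∀ (g : Stmt4.Cen mul) (n : ℕ), (g ^ n).1 = lpow mul one g.1 n := by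
    intro g n
    induction n with
    | zero => rw [pow_zero]; rfl
    | succ n ih => rw [pow_succ', val_mul, ih]; simp only [lpow]
  have L3' : ∀ y x s t, A' y x (mul s t) = A' y x s * A' y x t := fun y x s t =>
    Subtype.ext (Stmt4.L3 mul ld h_comm h_mul_ld h_ld_mul asc h_asc h_A hc y x s t)
  have flip' : ∀ x y z, A' z y x = (A' x y z)⁻¹ := fun x y z =>
    eq_inv_of_mul_eq_one_right
      (Subtype.ext (Stmt4.flipQ mul one ld h_mul_one h_comm h_ld_mul asc h_asc hc x y z))
  have one1' : ∀ y z, A' one y z = 1 := fun y z =>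
    Subtype.ext (Stmt4.asc_one1 mul one ld h_one_mul h_mul_one h_ld_mul asc h_asc y z)
  have one2' : ∀ x c, A' x one c = 1 := fun x c =>
    Subtype.ext (Stmt4.asc_one2 mul one ld h_one_mul h_mul_one h_ld_mul asc h_asc x c)
  have one3' : ∀ x y, A' x y one = 1 := fun x y =>
    Subtype.ext (Stmt4.asc_one3 mul one ld h_mul_one h_ld_mul asc h_asc x y)
  have xyx' : ∀ x y, A' x y x = 1 := fun x y =>
    Subtype.ext (Stmt4.asc_xyx mul one ld h_mul_one h_comm h_ld_mul asc h_asc x y)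
  have co' : ∀ w x y z, (A' x y z * A' w (mul x y) z) * A' w x y =
      A' w x (mul y z) * A' (mul w x) y z := fun w x y z =>
    Subtype.ext (Stmt4.co mul ld h_comm h_ld_mul asc h_asc hc w x y z)
  have L1' : ∀ s t v c, A' (mul s t) v c = A' s v c * A' t v c := by
    intro s t v c
    rw [flip' c v (mul s t), L3' c v s t, mul_inv, ← flip' c v s, ← flip' c v t]
  have L2' : ∀ x y z c, A' x (mul y z) c = A' x y c * A' x z c := by
    intro x y z c
    have h1 := co' x y z c
    rw [L3' x y z c, L1' x y z c] at h1
    apply mul_left_cancel (a := A' y z c)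
    apply mul_right_cancel (b := A' x y z)
    rw [h1]
    simp only [mul_comm, mul_left_comm, mul_assoc]
  have P1 : ∀ x v c n, A' (lpow mul one x n) v c = (A' x v c) ^ n := by
    intro x v c n
    induction n with
    | zero => rw [pow_zero]; exact one1' v c
    | succ n ih =>
        show A' (mul x (lpow mul one x n)) v c = _
        rw [L1', ih, pow_succ']
  have P2 : ∀ x y c n, A' x (lpow mul one y n) c = (A' x y c) ^ n := by
    intro x y c n
    induction n with
    | zero => rw [pow_zero]; exact one2' x c
    | succ n ih =>
        show A' x (mul y (lpow mul one y n)) c = _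
        rw [L2', ih, pow_succ']
  have P3 : ∀ x y z n, A' x y (lpow mul one z n) = (A' x y z) ^ n := by
    intro x y z n
    induction n with
    | zero => rw [pow_zero]; exact one3' x y
    | succ n ih =>
        show A' x y (mul z (lpow mul one z n)) = _
        rw [L3', ih, pow_succ']
  have key : A' (mul (lpow mul one a i1) (lpow mul one b i2))
        (mul (lpow mul one a j1) (lpow mul one b j2))
        (mul (lpow mul one a k1) (lpow mul one b k2)) *
        ((A' a a b) ^ (j1 * i2 * k1) * (A' a b b) ^ (j2 * i2 * k1)) =
      (A' a a b) ^ (j1 * i1 * k2) * (A' a b b) ^ (j2 * i1 * k2) := by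
    simp only [L1', L2', L3', P1, P2, P3]
    rw [xyx' a a, xyx' a b, xyx' b a, xyx' b b, flip' a a b, flip' a b b]
    simp only [one_pow, one_mul, mul_one, mul_pow, ← pow_mul, inv_pow]
    rw [show k2*j1*i1 = j1*i1*k2 by ring, show k2*j2*i1 = j2*i1*k2 by ring,
        show k1*j1*i2 = j1*i2*k1 by ring, show k1*j2*i2 = j2*i2*k1 by ring,
        ← mul_inv, mul_assoc, inv_mul_cancel, mul_one]
  have keyv := congrArg Subtype.val key
  rw [val_mul, val_mul, val_mul, val_pow, val_pow, val_pow, val_pow] at keyv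
  exact keyv
end

section
/- The set ℤ⁴ with multiplication (a1,a2,a3,a4)·(b1,b2,b3,b4) = (a1+b1, a2+b2, a3+b3−a1·b1·(a2+b2), a4+b4+a2·b2·(a1+b1)) is a commutative loop with identity (0,0,0,0) (for all a,b the equations a·x = b and y·a = b have unique solutions), and it satisfies the identity (A); that is, F̂ is a commutative automorphic loop. -/
/-- The multiplication of the loop `F̂` on `ℤ⁴`. -/
def hatMul : ℤ × ℤ × ℤ × ℤ → ℤ × ℤ × ℤ × ℤ → ℤ × ℤ × ℤ × ℤ
  | (a1, a2, a3, a4), (b1, b2, b3, b4) =>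
    (a1 + b1, a2 + b2, a3 + b3 - a1 * b1 * (a2 + b2), a4 + b4 + a2 * b2 * (a1 + b1))

/-- `F̂` is a commutative loop with identity `(0,0,0,0)` and it satisfies identity (A)
(stated via unique solutions: if `(y·x)·u = y·(x·(a·b))`, `(y·x)·v = y·(x·a)` and
`(y·x)·w = y·(x·b)` then `u = hatMul v w`). -/
theorem stmt_5 :
    (∀ a, hatMul (0, 0, 0, 0) a = a) ∧
    (∀ a, hatMul a (0, 0, 0, 0) = a) ∧
    (∀ a b, ∃! x, hatMul a x = b) ∧
    (∀ a b, ∃! y, hatMul y a = b) ∧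
    (∀ a b, hatMul a b = hatMul b a) ∧
    (∀ x y a b u v w,
      hatMul (hatMul y x) u = hatMul y (hatMul x (hatMul a b)) →
      hatMul (hatMul y x) v = hatMul y (hatMul x a) →
      hatMul (hatMul y x) w = hatMul y (hatMul x b) →
      u = hatMul v w) := by
  refine ⟨?_, ?_, ?_, ?_, ?_, ?_⟩
  · rintro ⟨a1, a2, a3, a4⟩
    simp [hatMul]
  · rintro ⟨a1, a2, a3, a4⟩
    simp [hatMul]
  · rintro ⟨a1, a2, a3, a4⟩ ⟨b1, b2, b3, b4⟩
    refine ⟨(b1 - a1, b2 - a2, b3 - a3 + a1 * (b1 - a1) * (a2 + (b2 - a2)),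
      b4 - a4 - a2 * (b2 - a2) * (a1 + (b1 - a1))),
      by simp only [hatMul, Prod.mk.injEq]; refine ⟨by ring, by ring, by ring, by ring⟩, ?_⟩
    rintro ⟨x1, x2, x3, x4⟩ h
    simp only [hatMul, Prod.mk.injEq] at h ⊢
    obtain ⟨h1, h2, h3, h4⟩ := h
    have e1 : x1 = b1 - a1 := by linarith
    have e2 : x2 = b2 - a2 := by linarith
    subst e1 e2
    exact ⟨rfl, rfl, by linear_combination h3, by linear_combination h4⟩
  · rintro ⟨a1, a2, a3, a4⟩ ⟨b1, b2, b3, b4⟩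
    refine ⟨(b1 - a1, b2 - a2, b3 - a3 + (b1 - a1) * a1 * ((b2 - a2) + a2),
      b4 - a4 - (b2 - a2) * a2 * ((b1 - a1) + a1)),
      by simp only [hatMul, Prod.mk.injEq]; refine ⟨by ring, by ring, by ring, by ring⟩, ?_⟩
    rintro ⟨x1, x2, x3, x4⟩ h
    simp only [hatMul, Prod.mk.injEq] at h ⊢
    obtain ⟨h1, h2, h3, h4⟩ := h
    have e1 : x1 = b1 - a1 := by linarith
    have e2 : x2 = b2 - a2 := by linarith
    subst e1 e2
    exact ⟨rfl, rfl, by linear_combination h3, by linear_combination h4⟩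
  · rintro ⟨a1, a2, a3, a4⟩ ⟨b1, b2, b3, b4⟩
    simp only [hatMul, Prod.mk.injEq]
    refine ⟨by ring, by ring, by ring, by ring⟩
  · rintro ⟨x1, x2, x3, x4⟩ ⟨y1, y2, y3, y4⟩ ⟨a1, a2, a3, a4⟩ ⟨b1, b2, b3, b4⟩
      ⟨u1, u2, u3, u4⟩ ⟨v1, v2, v3, v4⟩ ⟨w1, w2, w3, w4⟩ hu hv hw
    simp only [hatMul, Prod.mk.injEq] at hu hv hw ⊢
    obtain ⟨hu1, hu2, hu3, hu4⟩ := hu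
    obtain ⟨hv1, hv2, hv3, hv4⟩ := hv
    obtain ⟨hw1, hw2, hw3, hw4⟩ := hw
    have eu1 : u1 = a1 + b1 := by linarith
    have eu2 : u2 = a2 + b2 := by linarith
    have ev1 : v1 = a1 := by linarith
    have ev2 : v2 = a2 := by linarith
    have ew1 : w1 = b1 := by linarith
    have ew2 : w2 = b2 := by linarith
    subst eu1 eu2 ev1 ev2 ew1 ew2
    refine ⟨rfl, rfl, by linear_combination hu3 - hv3 - hw3,
      by linear_combination hu4 - hv4 - hw4⟩
end

section
/- In the commutative automorphic loop F̂ on ℤ⁴: the center Z(F̂), the left nucleus {z : (z·a)·b = z·(a·b) for all a,b}, and the middle nucleus {z : (a·z)·b = a·(z·b) for all a,b} all coincide and equal {(0,0,c,d) : c,d ∈ ℤ}; moreover, the associator of a = (a1,a2,a3,a4), b = (b1,b2,b3,b4), c = (c1,c2,c3,c4) equals (0, 0, b1·(a1·c2 − a2·c1), b2·(a1·c2 − a2·c1)). -/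
lemma hatMul_def (a1 a2 a3 a4 b1 b2 b3 b4 : ℤ) :
    hatMul (a1, a2, a3, a4) (b1, b2, b3, b4)
      = (a1 + b1, a2 + b2, a3 + b3 - a1 * b1 * (a2 + b2), a4 + b4 + a2 * b2 * (a1 + b1)) := rfl

lemma left_nuc_iff (z : ℤ × ℤ × ℤ × ℤ) :
    (∀ a b, hatMul (hatMul z a) b = hatMul z (hatMul a b)) ↔ z.1 = 0 ∧ z.2.1 = 0 := by
  obtain ⟨z1, z2, z3, z4⟩ := z
  constructor
  · intro h
    have h1 := h (1, 0, 0, 0) (0, 1, 0, 0)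
    have h2 := h (0, 1, 0, 0) (1, 0, 0, 0)
    simp only [hatMul_def, Prod.mk.injEq] at h1 h2; ring_nf at h1 h2
    exact ⟨by omega, show z2 = 0 by omega⟩
  · rintro ⟨hz1, hz2⟩
    simp only at hz1 hz2; subst hz1; subst hz2
    rintro ⟨a1, a2, a3, a4⟩ ⟨b1, b2, b3, b4⟩
    simp only [hatMul_def, Prod.mk.injEq]
    refine ⟨by ring, by ring, by ring, by ring⟩

lemma mid_nuc_iff (z : ℤ × ℤ × ℤ × ℤ) :
    (∀ a b, hatMul (hatMul a z) b = hatMul a (hatMul z b)) ↔ z.1 = 0 ∧ z.2.1 = 0 := by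
  obtain ⟨z1, z2, z3, z4⟩ := z
  constructor
  · intro h
    have h1 := h (1, 0, 0, 0) (0, 1, 0, 0)
    have h2 := h (0, 1, 0, 0) (1, 0, 0, 0)
    simp only [hatMul_def, Prod.mk.injEq] at h1 h2; ring_nf at h1 h2
    exact ⟨by omega, show z2 = 0 by omega⟩
  · rintro ⟨hz1, hz2⟩
    simp only at hz1 hz2; subst hz1; subst hz2
    rintro ⟨a1, a2, a3, a4⟩ ⟨b1, b2, b3, b4⟩
    simp only [hatMul_def, Prod.mk.injEq]
    refine ⟨by ring, by ring, by ring, by ring⟩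

/-- In `F̂`: the center, the left nucleus and the middle nucleus all equal
`{(0,0,c,d) : c,d ∈ ℤ}`, and the associator (the unique `t` with
`(a·(b·c))·t = (a·b)·c`) is `(0,0,b1(a1c2−a2c1),b2(a1c2−a2c1))`. -/
theorem stmt_6 :
    ({z : ℤ × ℤ × ℤ × ℤ |
        (∀ a, hatMul z a = hatMul a z) ∧
        (∀ a b, hatMul (hatMul z a) b = hatMul z (hatMul a b)) ∧
        (∀ a b, hatMul (hatMul a z) b = hatMul a (hatMul z b)) ∧
        (∀ a b, hatMul (hatMul a b) z = hatMul a (hatMul b z))}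
      = {z : ℤ × ℤ × ℤ × ℤ | z.1 = 0 ∧ z.2.1 = 0}) ∧
    ({z : ℤ × ℤ × ℤ × ℤ | ∀ a b, hatMul (hatMul z a) b = hatMul z (hatMul a b)}
      = {z : ℤ × ℤ × ℤ × ℤ | z.1 = 0 ∧ z.2.1 = 0}) ∧
    ({z : ℤ × ℤ × ℤ × ℤ | ∀ a b, hatMul (hatMul a z) b = hatMul a (hatMul z b)}
      = {z : ℤ × ℤ × ℤ × ℤ | z.1 = 0 ∧ z.2.1 = 0}) ∧
    (∀ a b c t : ℤ × ℤ × ℤ × ℤ,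
      hatMul (hatMul a (hatMul b c)) t = hatMul (hatMul a b) c →
      t = (0, 0, b.1 * (a.1 * c.2.1 - a.2.1 * c.1), b.2.1 * (a.1 * c.2.1 - a.2.1 * c.1))) := by
  refine ⟨?_, ?_, ?_, ?_⟩
  · ext z
    simp only [Set.mem_setOf_eq]
    constructor
    · rintro ⟨_, h, _, _⟩
      exact (left_nuc_iff z).mp h
    · rintro ⟨hz1, hz2⟩
      obtain ⟨z1, z2, z3, z4⟩ := z
      simp only at hz1 hz2; subst hz1; subst hz2
      refine ⟨?_, ?_, ?_, ?_⟩ <;>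
        (first
          | (rintro ⟨a1, a2, a3, a4⟩;
             simp only [hatMul_def, Prod.mk.injEq];
             refine ⟨by ring, by ring, by ring, by ring⟩)
          | (rintro ⟨a1, a2, a3, a4⟩ ⟨b1, b2, b3, b4⟩;
             simp only [hatMul_def, Prod.mk.injEq];
             refine ⟨by ring, by ring, by ring, by ring⟩))
  · ext z; simpa using left_nuc_iff z
  · ext z; simpa using mid_nuc_iff z
  · rintro ⟨a1, a2, a3, a4⟩ ⟨b1, b2, b3, b4⟩ ⟨c1, c2, c3, c4⟩ ⟨t1, t2, t3, t4⟩ h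
    simp only [hatMul_def, Prod.mk.injEq] at h ⊢
    obtain ⟨h1, h2, h3, h4⟩ := h
    have ht1 : t1 = 0 := by linarith
    have ht2 : t2 = 0 := by linarith
    subst ht1; subst ht2
    refine ⟨rfl, rfl, by linear_combination h3, by linear_combination h4⟩
end

section
/- Let Q be a commutative loop satisfying identity (A) in which every associator lies in the center Z(Q), and let a, b ∈ Q. Then there exists a unique map φ : F̂ → Q such that φ(u·v) = φ(u)·φ(v) for all u, v ∈ F̂, φ(1,0,0,0) = a, and φ(0,1,0,0) = b. (F̂ is the free commutative automorphic loop of nilpotency class two on two generators.) -/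
theorem Int.funext_of_succ_eq_mul {M : Type*} [Mul M] [IsRightCancelMul M] {f g : ℤ → M}
    {x : M} (h0 : f 0 = g 0) (hf : ∀ n, f (n + 1) = f n * x) (hg : ∀ n, g (n + 1) = g n * x) :
    f = g := by
  funext n
  induction n using Int.induction_on with
  | zero => exact h0
  | succ i ih => rw [hf, hg, ih]
  | pred i ih => exact mul_right_cancel (by rw [← hf, ← hg, sub_add_cancel, ih])

theorem zpow_mul_zpow_mul_zpow_mul_zpow {G : Type*} [CommGroup G] (x y : G) (i j k l : ℤ) :
    x ^ i * y ^ j * (x ^ k * y ^ l) = x ^ (i + k) * y ^ (j + l) := by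
  rw [zpow_add, zpow_add, mul_mul_mul_comm]

class CommLoop (Q : Type*) extends MulOneClass Q, CommMagma Q where
  ldiv : Q → Q → Q
  mul_ldiv (a b : Q) : a * ldiv a b = b
  ldiv_mul (a b : Q) : ldiv a (a * b) = b

namespace CommLoop

variable {Q : Type*} [CommLoop Q]

instance : IsCancelMul Q :=
  have : IsLeftCancelMul Q :=
    ⟨fun a b c h => by simpa only [ldiv_mul] using congrArg (ldiv a) h⟩
  CommMagma.IsLeftCancelMul.toIsCancelMul Q

def associator (a b c : Q) : Q := ldiv (a * (b * c)) (a * b * c)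

theorem mul_associator (a b c : Q) : a * (b * c) * associator a b c = a * b * c :=
  mul_ldiv _ _

def inv (x : Q) : Q := ldiv x 1

theorem mul_inv_self (x : Q) : x * inv x = 1 := mul_ldiv x 1

theorem inv_mul_self (x : Q) : inv x * x = 1 := by rw [mul_comm, mul_inv_self]

def natPow (x : Q) : ℕ → Q
  | 0 => 1
  | n + 1 => natPow x n * x

def intPow (x : Q) : ℤ → Q
  | (n : ℕ) => natPow x n
  | .negSucc n => natPow (inv x) (n + 1)

theorem intPow_zero (x : Q) : intPow x 0 = 1 := rfl

theorem intPow_one (x : Q) : intPow x 1 = x := one_mul x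

-- In a commutative loop this single identity already puts `z` in the center.
def IsCentral (z : Q) : Prop := ∀ u v : Q, z * u * v = z * (u * v)

theorem isCentral_one : IsCentral (1 : Q) := fun u v => by rw [one_mul, one_mul]

theorem IsCentral.mul {z w : Q} (hz : IsCentral z) (hw : IsCentral w) : IsCentral (z * w) :=
  fun u v => by rw [hz w u, hz (w * u) v, hw u v, ← hz w (u * v)]

theorem isCentral_inv {z : Q} (hz : IsCentral z) : IsCentral (inv z) := fun u v =>
  mul_left_cancel (a := z) <| by
    rw [← hz, ← hz, mul_inv_self, one_mul, ← hz, mul_inv_self, one_mul]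

abbrev Center (Q : Type*) [CommLoop Q] : Type _ := {z : Q // IsCentral z}

instance : CommGroup (Center Q) where
  mul z w := ⟨z * w, z.2.mul w.2⟩
  one := ⟨1, isCentral_one⟩
  inv z := ⟨inv z, isCentral_inv z.2⟩
  mul_assoc z w v := Subtype.ext (z.2 w v)
  one_mul z := Subtype.ext (one_mul (z : Q))
  mul_one z := Subtype.ext (mul_one (z : Q))
  mul_comm z w := Subtype.ext (mul_comm (z : Q) w)
  inv_mul_cancel z := Subtype.ext (inv_mul_self (z : Q))

namespace Center

@[simp] theorem coe_one : ((1 : Center Q) : Q) = 1 := rfl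

@[simp] theorem coe_mul (z w : Center Q) : ((z * w : Center Q) : Q) = z * w := rfl

theorem mul_coe_mul (x y : Q) (z : Center Q) : x * z * y = x * y * z := by
  rw [mul_comm x, z.2, mul_comm]

theorem mul_mul_coe (x y : Q) (z : Center Q) : x * (y * z) = x * y * z := by
  rw [mul_comm y, mul_comm, z.2, mul_comm y, mul_comm]

theorem mul_coe_mul_coe (x : Q) (z w : Center Q) : x * z * w = x * ↑(z * w) := by
  rw [coe_mul, mul_mul_coe, mul_coe_mul]

theorem mul_coe_mul_mul_coe (x y : Q) (z w : Center Q) :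
    x * z * (y * w) = x * y * ↑(z * w) := by
  rw [mul_mul_coe, mul_coe_mul, mul_coe_mul_coe]

theorem eq_of_mul_coe_eq {x : Q} {z w : Center Q} (h : x * z = x * w) : z = w :=
  Subtype.ext (mul_left_cancel h)

end Center

end CommLoop

open CommLoop

class CommAutLoopClassTwo (Q : Type*) extends CommLoop Q where
  automorphic (x y a b : Q) : ldiv (y * x) (y * (x * (a * b))) =
    ldiv (y * x) (y * (x * a)) * ldiv (y * x) (y * (x * b))
  isCentral_associator (a b c : Q) : IsCentral (CommLoop.associator a b c)

namespace CommAutLoopClassTwo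

open CommLoop.Center

variable {Q : Type*} [CommAutLoopClassTwo Q]

def assoc (a b c : Q) : Center Q := ⟨CommLoop.associator a b c, isCentral_associator a b c⟩

theorem mul_mul_eq_assoc (a b c : Q) : a * b * c = a * (b * c) * assoc a b c :=
  (mul_associator a b c).symm

theorem mul_mul_eq_assoc_inv (a b c : Q) : a * (b * c) = a * b * c * ↑(assoc a b c)⁻¹ := by
  rw [mul_mul_eq_assoc a b c, mul_coe_mul_coe, mul_inv_cancel, coe_one, mul_one]

theorem mul_assoc_of_assoc_eq_one {a b c : Q} (h : assoc a b c = 1) :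
    a * b * c = a * (b * c) := by
  rw [mul_mul_eq_assoc, h, coe_one, mul_one]

theorem assoc_self (x y : Q) : assoc x y x = 1 :=
  eq_of_mul_coe_eq (x := x * (y * x)) <| by
    rw [← mul_mul_eq_assoc, coe_one, mul_one, mul_comm, mul_comm y]

theorem ldiv_mul_mul (y x t : Q) : ldiv (y * x) (y * (x * t)) = t * ↑(assoc y x t)⁻¹ := by
  rw [mul_mul_eq_assoc_inv, ← mul_mul_coe, ldiv_mul]

theorem assoc_mul_right (y x s t : Q) : assoc y x (s * t) = assoc y x s * assoc y x t := by
  have h := automorphic x y s t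
  rw [ldiv_mul_mul, ldiv_mul_mul, ldiv_mul_mul, mul_coe_mul_mul_coe] at h
  have h' := eq_of_mul_coe_eq h
  rwa [← mul_inv, inv_inj] at h'

theorem assoc_one_right (u v : Q) : assoc u v 1 = 1 :=
  (mul_eq_left (a := assoc u v 1)).mp (by rw [← assoc_mul_right, mul_one])

theorem assoc_swap (x y z : Q) : assoc z y x = (assoc x y z)⁻¹ := by
  refine eq_inv_of_mul_eq_one_right (eq_of_mul_coe_eq (x := x * (y * z)) ?_)
  rw [← mul_coe_mul_coe, ← mul_mul_eq_assoc, coe_one, mul_one, mul_comm (x * y), mul_comm x,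
    ← mul_mul_eq_assoc, mul_comm, mul_comm z]

theorem assoc_cycle (x y z : Q) : assoc x y z = (assoc y z x * assoc z x y)⁻¹ := by
  rw [mul_inv]
  refine eq_of_mul_coe_eq (x := x * (y * z)) ?_
  calc x * (y * z) * assoc x y z = z * (x * y) := by rw [← mul_mul_eq_assoc, mul_comm]
    _ = y * (z * x) * ↑(assoc z x y)⁻¹ := by rw [mul_mul_eq_assoc_inv, mul_comm (z * x)]
    _ = x * (y * z) * ↑((assoc y z x)⁻¹ * (assoc z x y)⁻¹) := by
      rw [mul_mul_eq_assoc_inv, mul_comm (y * z), mul_coe_mul_coe]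

theorem assoc_mul_left (s t y z : Q) : assoc (s * t) y z = assoc s y z * assoc t y z := by
  rw [assoc_swap z y (s * t), assoc_mul_right, mul_inv, ← assoc_swap, ← assoc_swap]

theorem assoc_one_left (v w : Q) : assoc 1 v w = 1 :=
  (mul_eq_left (a := assoc 1 v w)).mp (by rw [← assoc_mul_left, mul_one])

theorem assoc_natPow_left (s v w : Q) (n : ℕ) : assoc (natPow s n) v w = assoc s v w ^ n := by
  induction n with
  | zero => exact assoc_one_left v w
  | succ n ih => rw [natPow, assoc_mul_left, ih, pow_succ]

theorem assoc_inv_left_self (x v : Q) : assoc (inv x) v x = 1 := by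
  have h := assoc_mul_left x (inv x) v x
  rwa [mul_inv_self, assoc_one_left, assoc_self, one_mul, eq_comm] at h

theorem assoc_intPow_left_self (x v : Q) (m : ℤ) : assoc (intPow x m) v x = 1 := by
  cases m <;> simp only [intPow, assoc_natPow_left, assoc_self, assoc_inv_left_self, one_pow]

theorem intPow_succ (x : Q) (n : ℤ) : intPow x (n + 1) = intPow x n * x := by
  cases n with
  | ofNat k => rfl
  | negSucc k =>
    have hk : intPow x (.negSucc k + 1) = natPow (inv x) k := by cases k <;> rfl
    have h1 : assoc (natPow (inv x) k) (inv x) x = 1 := by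
      rw [assoc_natPow_left, assoc_inv_left_self, one_pow]
    rw [hk]
    change _ = natPow (inv x) k * inv x * x
    rw [mul_assoc_of_assoc_eq_one h1, inv_mul_self, mul_one]

theorem intPow_add (x : Q) (m n : ℤ) : intPow x (m + n) = intPow x m * intPow x n := by
  refine congrFun (Int.funext_of_succ_eq_mul (f := fun n => intPow x (m + n))
    (g := fun n => intPow x m * intPow x n) (x := x) (by simp [intPow_zero]) (fun n => ?_)
    (fun n => ?_)) n
  · simp only [← add_assoc, intPow_succ]
  · simp only [intPow_succ, mul_assoc_of_assoc_eq_one (assoc_intPow_left_self x _ m)]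

theorem assoc_intPow_right (u v x : Q) (n : ℤ) : assoc u v (intPow x n) = assoc u v x ^ n :=
  congrFun (Int.funext_of_succ_eq_mul (f := fun n => assoc u v (intPow x n))
    (by simp [intPow_zero, assoc_one_right]) (fun n => by simp only [intPow_succ, assoc_mul_right])
    (fun n => zpow_add_one _ n)) n

theorem assoc_intPow_left (x v w : Q) (n : ℤ) : assoc (intPow x n) v w = assoc x v w ^ n := by
  rw [assoc_swap w v, assoc_intPow_right, ← inv_zpow, ← assoc_swap]

theorem assoc_intPow_mid (u x w : Q) (n : ℤ) : assoc u (intPow x n) w = assoc u x w ^ n := by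
  rw [assoc_cycle u (intPow x n) w, assoc_intPow_left, assoc_intPow_right, ← mul_zpow,
    ← inv_zpow, ← assoc_cycle]

theorem assoc_intPow_intPow_intPow (x y z : Q) (i j k : ℤ) :
    assoc (intPow x i) (intPow y j) (intPow z k) = assoc x y z ^ (i * j * k) := by
  rw [assoc_intPow_left, assoc_intPow_mid, assoc_intPow_right, ← zpow_mul, ← zpow_mul]
  ring_nf

section Lift

variable (a b : Q)

theorem intPow_mul_intPow_mul (m p n q : ℤ) :
    intPow a m * intPow b p * (intPow a n * intPow b q) =
      intPow a (m + n) * intPow b (p + q) *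
        ↑(assoc a a b ^ (-(m * n * (p + q))) * assoc a b b ^ (p * q * (m + n))) := by
  have e1 : assoc (intPow a m * intPow b p) (intPow a n) (intPow b q) =
      assoc a a b ^ (m * n * q) := by
    rw [assoc_mul_left, assoc_intPow_intPow_intPow, assoc_intPow_intPow_intPow, assoc_self,
      one_zpow, mul_one]
  have e2 := assoc_intPow_intPow_intPow a a b n m p
  have e3 := assoc_intPow_intPow_intPow a b b (m + n) p q
  calc intPow a m * intPow b p * (intPow a n * intPow b q)
      = intPow a n * (intPow a m * intPow b p) * intPow b q *
          ↑(assoc (intPow a m * intPow b p) (intPow a n) (intPow b q))⁻¹ := by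
        rw [mul_mul_eq_assoc_inv, mul_comm (intPow a m * intPow b p)]
    _ = intPow a (m + n) * intPow b p * intPow b q *
          ↑((assoc (intPow a n) (intPow a m) (intPow b p))⁻¹ *
            (assoc (intPow a m * intPow b p) (intPow a n) (intPow b q))⁻¹) := by
        rw [mul_mul_eq_assoc_inv (intPow a n), mul_coe_mul, mul_coe_mul_coe, ← intPow_add,
          add_comm n]
    _ = _ := by
        rw [mul_mul_eq_assoc (intPow a (m + n)), mul_coe_mul_coe, ← intPow_add, e1, e2, e3,
          ← zpow_neg, ← zpow_neg, ← zpow_add, mul_comm (assoc a b b ^ _)]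
        ring_nf

def lift (u : ℤ × ℤ × ℤ × ℤ) : Q :=
  intPow a u.1 * intPow b u.2.1 * ↑(assoc a a b ^ u.2.2.1 * assoc a b b ^ u.2.2.2)

theorem lift_hatMul (u v : ℤ × ℤ × ℤ × ℤ) :
    lift a b (hatMul u v) = lift a b u * lift a b v := by
  obtain ⟨m, p, s, t⟩ := u
  obtain ⟨n, q, s', t'⟩ := v
  rw [lift, lift, lift, mul_coe_mul_mul_coe, intPow_mul_intPow_mul, mul_coe_mul_coe]
  congr 2
  simp only [hatMul, zpow_mul_zpow_mul_zpow_mul_zpow]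
  congr 2 <;> ring

theorem lift_one_zero : lift a b (1, 0, 0, 0) = a := by
  simp [lift, intPow_one, intPow_zero]

theorem lift_zero_one : lift a b (0, 1, 0, 0) = b := by
  simp [lift, intPow_one, intPow_zero]

variable {a b} {ψ : ℤ × ℤ × ℤ × ℤ → Q} (hψ : ∀ u v, ψ (hatMul u v) = ψ u * ψ v)
include hψ

theorem map_zero_of_map_hatMul : ψ (0, 0, 0, 0) = 1 :=
  mul_left_cancel (a := ψ (0, 0, 0, 0)) (by rw [← hψ, mul_one]; rfl)

theorem map_eq_associator_of_map_hatMul {x y z w : ℤ × ℤ × ℤ × ℤ}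
    (h : hatMul (hatMul x y) z = hatMul (hatMul x (hatMul y z)) w) :
    ψ w = CommLoop.associator (ψ x) (ψ y) (ψ z) :=
  mul_left_cancel (a := ψ x * (ψ y * ψ z)) (by rw [mul_associator]; simp only [← hψ, h])

theorem eq_lift_of_map_hatMul (ha : ψ (1, 0, 0, 0) = a) (hb : ψ (0, 1, 0, 0) = b) :
    ψ = lift a b := by
  have h0 := map_zero_of_map_hatMul hψ
  have hc : ψ (0, 0, 1, 0) = assoc a a b := by
    rw [← ha, ← hb]; exact map_eq_associator_of_map_hatMul hψ (by decide)
  have hd : ψ (0, 0, 0, 1) = assoc a b b := by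
    rw [← ha, ← hb]; exact map_eq_associator_of_map_hatMul hψ (by decide)
  have h1 : (fun n => ψ (n, 0, 0, 0)) = intPow a :=
    Int.funext_of_succ_eq_mul h0 (fun n => by simp [← ha, ← hψ, hatMul]) (intPow_succ a)
  have h2 : (fun n => ψ (0, n, 0, 0)) = intPow b :=
    Int.funext_of_succ_eq_mul h0 (fun n => by simp [← hb, ← hψ, hatMul]) (intPow_succ b)
  have h3 : (fun n => ψ (0, 0, n, 0)) = fun n => ↑(assoc a a b ^ n) :=
    Int.funext_of_succ_eq_mul (x := ↑(assoc a a b)) h0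
      (fun n => by simp [← hc, ← hψ, hatMul])
      (fun n => by rw [zpow_add_one]; rfl)
  have h4 : (fun n => ψ (0, 0, 0, n)) = fun n => ↑(assoc a b b ^ n) :=
    Int.funext_of_succ_eq_mul (x := ↑(assoc a b b)) h0
      (fun n => by simp [← hd, ← hψ, hatMul])
      (fun n => by rw [zpow_add_one]; rfl)
  funext ⟨u₁, u₂, u₃, u₄⟩
  have hu : hatMul (hatMul (hatMul (u₁, 0, 0, 0) (0, u₂, 0, 0)) (0, 0, u₃, 0)) (0, 0, 0, u₄) =
      (u₁, u₂, u₃, u₄) := by simp [hatMul]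
  rw [← hu, hψ, hψ, hψ, congrFun h1, congrFun h2, congrFun h3, congrFun h4, mul_coe_mul_coe,
    hu]
  rfl

end Lift

end CommAutLoopClassTwo

/-- `F̂` is the free commutative automorphic loop of nilpotency class two on two
generators: for any commutative loop `Q` satisfying identity (A) whose associators are
all central, and any `a, b ∈ Q`, there is a unique multiplication-preserving map
`φ : F̂ → Q` with `φ(1,0,0,0) = a` and `φ(0,1,0,0) = b`. -/
theorem stmt_7 {Q : Type*} (mul : Q → Q → Q) (one : Q) (ld : Q → Q → Q)
    (h_one_mul : ∀ a, mul one a = a)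
    (h_mul_one : ∀ a, mul a one = a)
    (h_comm : ∀ a b, mul a b = mul b a)
    (h_mul_ld : ∀ a b, mul a (ld a b) = b)
    (h_ld_mul : ∀ a b, ld a (mul a b) = b)
    (h_A : ∀ x y a b, ld (mul y x) (mul y (mul x (mul a b))) =
        mul (ld (mul y x) (mul y (mul x a))) (ld (mul y x) (mul y (mul x b))))
    (asc : Q → Q → Q → Q)
    (h_asc : ∀ a b c, mul (mul a b) c = mul (mul a (mul b c)) (asc a b c))
    (h_asc_central : ∀ a b c u v,
      mul (asc a b c) u = mul u (asc a b c) ∧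
      mul (mul (asc a b c) u) v = mul (asc a b c) (mul u v) ∧
      mul (mul u (asc a b c)) v = mul u (mul (asc a b c) v) ∧
      mul (mul u v) (asc a b c) = mul u (mul v (asc a b c)))
    (a b : Q) :
    ∃! φ : ℤ × ℤ × ℤ × ℤ → Q,
      (∀ u v, φ (hatMul u v) = mul (φ u) (φ v)) ∧
      φ (1, 0, 0, 0) = a ∧ φ (0, 1, 0, 0) = b := by
  let : CommLoop Q :=
    { mul, one, ldiv := ld, one_mul := h_one_mul, mul_one := h_mul_one, mul_comm := h_comm,
      mul_ldiv := h_mul_ld, ldiv_mul := h_ld_mul }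
  have h_associator (a b c : Q) : CommLoop.associator a b c = asc a b c := by
    rw [CommLoop.associator, ← h_ld_mul (mul a (mul b c)) (asc a b c), ← h_asc]; rfl
  let : CommAutLoopClassTwo Q :=
    { automorphic := h_A
      isCentral_associator := fun a b c => by
        rw [h_associator]; exact fun u v => (h_asc_central a b c u v).2.1 }
  exact ⟨CommAutLoopClassTwo.lift a b,
    ⟨CommAutLoopClassTwo.lift_hatMul a b, CommAutLoopClassTwo.lift_one_zero a b,
      CommAutLoopClassTwo.lift_zero_one a b⟩,
    fun ψ ⟨hψ, ha, hb⟩ => CommAutLoopClassTwo.eq_lift_of_map_hatMul hψ ha hb⟩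
end

section
/- For every prime p, the set (ℤ_p)⁶ with the multiplication of F_p is a commutative loop with identity (0,0,0,0,0,0) satisfying identity (A), and its center, its left nucleus {z : (z·a)·b = z·(a·b) for all a,b}, and its middle nucleus {z : (a·z)·b = a·(z·b) for all a,b} all coincide and equal {(0,0,c3,c4,c5,c6) : c3,c4,c5,c6 ∈ ℤ_p}. -/
/-- The modular overflow indicator `(a,b)_p`. -/
def ovf (p : ℕ) (a b : ZMod p) : ZMod p := if p ≤ a.val + b.val then 1 else 0

/-- The carrier `(ℤ_p)⁶` of the loop `F_p`. -/
abbrev FpCarrier (p : ℕ) := ZMod p × ZMod p × ZMod p × ZMod p × ZMod p × ZMod p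

/-- The multiplication of the loop `F_p`. -/
def fpMul (p : ℕ) : FpCarrier p → FpCarrier p → FpCarrier p
  | (a1, a2, a3, a4, a5, a6), (b1, b2, b3, b4, b5, b6) =>
    (a1 + b1, a2 + b2, a3 + b3 + ovf p a1 b1, a4 + b4 + ovf p a2 b2,
     a5 + b5 - a1 * b1 * (a2 + b2), a6 + b6 + a2 * b2 * (a1 + b1))

/-! `ovf p` is the carry of adding two base-`p` digits, hence a symmetric normalized 2-cocycle
on `ZMod p`; so the first four coordinates of `F_p` form an abelian group. All the
non-associativity sits in the last two coordinates: `(a b) c` and `a (b c)` differ there by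
`b₁ · cross a c` and `b₂ · cross a c`, where `cross a c = a₁ c₂ - a₂ c₁`, and this pins down the
nuclei. The inner mapping `L_{yx}⁻¹ L_y L_x` only shears the last two coordinates by linear
functions of the first two, so it is an automorphism, which is identity (A). -/

namespace FpLoop

variable {p : ℕ}

theorem ovf_comm (a b : ZMod p) : ovf p a b = ovf p b a := by
  rw [ovf, ovf, Nat.add_comm]

theorem fpMul_comm (a b : FpCarrier p) : fpMul p a b = fpMul p b a := by
  obtain ⟨a1, a2, a3, a4, a5, a6⟩ := a
  obtain ⟨b1, b2, b3, b4, b5, b6⟩ := b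
  simp only [fpMul, Prod.mk.injEq, ovf_comm a1, ovf_comm a2]
  refine ⟨?_, ?_, ?_, ?_, ?_, ?_⟩ <;> ring

def leftDiv (g h : FpCarrier p) : FpCarrier p :=
  (h.1 - g.1, h.2.1 - g.2.1,
   h.2.2.1 - g.2.2.1 - ovf p g.1 (h.1 - g.1),
   h.2.2.2.1 - g.2.2.2.1 - ovf p g.2.1 (h.2.1 - g.2.1),
   h.2.2.2.2.1 - g.2.2.2.2.1 + g.1 * (h.1 - g.1) * h.2.1,
   h.2.2.2.2.2 - g.2.2.2.2.2 - g.2.1 * (h.2.1 - g.2.1) * h.1)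

theorem fpMul_leftDiv (g h : FpCarrier p) : fpMul p g (leftDiv g h) = h := by
  obtain ⟨g1, g2, g3, g4, g5, g6⟩ := g
  obtain ⟨h1, h2, h3, h4, h5, h6⟩ := h
  simp only [fpMul, leftDiv, Prod.mk.injEq]
  refine ⟨?_, ?_, ?_, ?_, ?_, ?_⟩ <;> ring

theorem leftDiv_fpMul (g u : FpCarrier p) : leftDiv g (fpMul p g u) = u := by
  obtain ⟨g1, g2, g3, g4, g5, g6⟩ := g
  obtain ⟨u1, u2, u3, u4, u5, u6⟩ := u
  simp only [fpMul, leftDiv, Prod.mk.injEq, add_sub_cancel_left, true_and]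
  refine ⟨?_, ?_, ?_, ?_⟩ <;> ring

theorem fpMul_bijective (g : FpCarrier p) : Function.Bijective (fpMul p g) :=
  ⟨Function.LeftInverse.injective (leftDiv_fpMul g), fun h => ⟨leftDiv g h, fpMul_leftDiv g h⟩⟩

/-- The inner mapping `L_{yx}⁻¹ L_y L_x`. -/
def innerMap (x y c : FpCarrier p) : FpCarrier p :=
  (c.1, c.2.1, c.2.2.1, c.2.2.2.1,
   c.2.2.2.2.1 + x.1 * y.2.1 * c.1 - x.1 * y.1 * c.2.1,
   c.2.2.2.2.2 + x.2.1 * y.2.1 * c.1 - x.2.1 * y.1 * c.2.1)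

theorem innerMap_fpMul (x y a b : FpCarrier p) :
    innerMap x y (fpMul p a b) = fpMul p (innerMap x y a) (innerMap x y b) := by
  obtain ⟨a1, a2, a3, a4, a5, a6⟩ := a
  obtain ⟨b1, b2, b3, b4, b5, b6⟩ := b
  simp only [fpMul, innerMap, Prod.mk.injEq, true_and]
  constructor <;> ring

def cross (a c : FpCarrier p) : ZMod p := a.1 * c.2.1 - a.2.1 * c.1

variable (p) in
def leftNucleus : Set (FpCarrier p) :=
  {z | ∀ a b, fpMul p (fpMul p z a) b = fpMul p z (fpMul p a b)}

variable (p) in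
def middleNucleus : Set (FpCarrier p) :=
  {z | ∀ a b, fpMul p (fpMul p a z) b = fpMul p a (fpMul p z b)}

variable (p) in
def rightNucleus : Set (FpCarrier p) :=
  {z | ∀ a b, fpMul p (fpMul p a b) z = fpMul p a (fpMul p b z)}

variable (p) in
def center : Set (FpCarrier p) :=
  {z | (∀ a, fpMul p z a = fpMul p a z) ∧ z ∈ leftNucleus p ∧ z ∈ middleNucleus p ∧
    z ∈ rightNucleus p}

variable [NeZero p]

theorem ovf_eq_div (a b : ZMod p) : ovf p a b = ((a.val + b.val) / p : ℕ) := by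
  have ha := ZMod.val_lt a
  have hb := ZMod.val_lt b
  unfold ovf
  split_ifs with h
  · rw [Nat.div_eq_of_lt_le (k := 1) (by omega) (by omega), Nat.cast_one]
  · rw [Nat.div_eq_of_lt (by omega), Nat.cast_zero]

@[simp]
theorem ovf_zero_left (a : ZMod p) : ovf p 0 a = 0 := by
  simp [ovf_eq_div, Nat.div_eq_of_lt (ZMod.val_lt a)]

@[simp]
theorem ovf_zero_right (a : ZMod p) : ovf p a 0 = 0 := by
  rw [ovf_comm, ovf_zero_left]

theorem ovf_add_ovf_add (a b c : ZMod p) :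
    ovf p a b + ovf p (a + b) c = ((a.val + b.val + c.val) / p : ℕ) := by
  have hp : 0 < p := Nat.pos_of_neZero p
  rw [ovf_eq_div, ovf_eq_div, ZMod.val_add, ← Nat.cast_add]
  conv_rhs => rw [← Nat.mod_add_div (a.val + b.val) p, Nat.add_right_comm,
    Nat.add_mul_div_left _ _ hp]
  rw [Nat.add_comm]

theorem ovf_cocycle (a b c : ZMod p) :
    ovf p a b + ovf p (a + b) c = ovf p b c + ovf p a (b + c) := by
  rw [ovf_add_ovf_add, ovf_comm a, ovf_add_ovf_add, Nat.add_comm (b.val + c.val)]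
  ac_rfl

theorem zero_fpMul (a : FpCarrier p) : fpMul p (0, 0, 0, 0, 0, 0) a = a := by
  obtain ⟨a1, a2, a3, a4, a5, a6⟩ := a
  simp [fpMul]

theorem fpMul_zero (a : FpCarrier p) : fpMul p a (0, 0, 0, 0, 0, 0) = a := by
  obtain ⟨a1, a2, a3, a4, a5, a6⟩ := a
  simp [fpMul]

theorem fpMul_innerMap (x y c : FpCarrier p) :
    fpMul p (fpMul p y x) (innerMap x y c) = fpMul p y (fpMul p x c) := by
  obtain ⟨x1, x2, x3, x4, x5, x6⟩ := x
  obtain ⟨y1, y2, y3, y4, y5, y6⟩ := y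
  obtain ⟨c1, c2, c3, c4, c5, c6⟩ := c
  simp only [fpMul, innerMap, Prod.mk.injEq]
  refine ⟨by ring, by ring, ?_, ?_, by ring, by ring⟩
  · linear_combination ovf_cocycle y1 x1 c1
  · linear_combination ovf_cocycle y2 x2 c2

theorem eq_innerMap_of_fpMul_eq {x y c u : FpCarrier p}
    (h : fpMul p (fpMul p y x) u = fpMul p y (fpMul p x c)) : u = innerMap x y c :=
  (fpMul_bijective _).1 (h.trans (fpMul_innerMap x y c).symm)

theorem fpMul_assoc_iff (a b c : FpCarrier p) :
    fpMul p (fpMul p a b) c = fpMul p a (fpMul p b c) ↔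
      b.1 * cross a c = 0 ∧ b.2.1 * cross a c = 0 := by
  obtain ⟨a1, a2, a3, a4, a5, a6⟩ := a
  obtain ⟨b1, b2, b3, b4, b5, b6⟩ := b
  obtain ⟨c1, c2, c3, c4, c5, c6⟩ := c
  have h3 : a3 + b3 + ovf p a1 b1 + c3 + ovf p (a1 + b1) c1
      = a3 + (b3 + c3 + ovf p b1 c1) + ovf p a1 (b1 + c1) := by
    linear_combination ovf_cocycle a1 b1 c1
  have h4 : a4 + b4 + ovf p a2 b2 + c4 + ovf p (a2 + b2) c2
      = a4 + (b4 + c4 + ovf p b2 c2) + ovf p a2 (b2 + c2) := by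
    linear_combination ovf_cocycle a2 b2 c2
  simp only [fpMul, cross, Prod.mk.injEq, add_assoc a1, add_assoc a2, h3, h4, true_and]
  constructor <;> rintro ⟨h5, h6⟩ <;> exact ⟨by linear_combination h5, by linear_combination h6⟩

theorem leftNucleus_eq : leftNucleus p = {z | z.1 = 0 ∧ z.2.1 = 0} := by
  ext z
  simp only [leftNucleus, Set.mem_ofPred_eq, fpMul_assoc_iff, cross]
  refine ⟨fun h => ⟨?_, ?_⟩, fun ⟨h1, h2⟩ _ _ => by simp [h1, h2]⟩
  · simpa using (h (1, 0, 0, 0, 0, 0) (0, 1, 0, 0, 0, 0)).1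
  · simpa using (h (1, 0, 0, 0, 0, 0) (1, 0, 0, 0, 0, 0)).1

theorem middleNucleus_eq : middleNucleus p = {z | z.1 = 0 ∧ z.2.1 = 0} := by
  ext z
  simp only [middleNucleus, Set.mem_ofPred_eq, fpMul_assoc_iff, cross]
  refine ⟨fun h => by simpa using h (1, 0, 0, 0, 0, 0) (0, 1, 0, 0, 0, 0),
    fun ⟨h1, h2⟩ _ _ => by simp [h1, h2]⟩

theorem rightNucleus_eq : rightNucleus p = {z | z.1 = 0 ∧ z.2.1 = 0} := by
  ext z
  simp only [rightNucleus, Set.mem_ofPred_eq, fpMul_assoc_iff, cross]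
  refine ⟨fun h => ⟨?_, ?_⟩, fun ⟨h1, h2⟩ _ _ => by simp [h1, h2]⟩
  · simpa using (h (0, 1, 0, 0, 0, 0) (1, 0, 0, 0, 0, 0)).1
  · simpa using (h (1, 0, 0, 0, 0, 0) (1, 0, 0, 0, 0, 0)).1

theorem center_eq : center p = {z | z.1 = 0 ∧ z.2.1 = 0} := by
  ext z
  refine ⟨fun h => leftNucleus_eq (p := p) ▸ h.2.1, fun h => ⟨(fpMul_comm z ·), ?_, ?_, ?_⟩⟩
  · rwa [leftNucleus_eq]
  · rwa [middleNucleus_eq]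
  · rwa [rightNucleus_eq]

end FpLoop

open FpLoop

/-- `F_p` is a commutative loop with identity `(0,0,0,0,0,0)` satisfying identity (A)
(stated via unique solutions), and its center, left nucleus and middle nucleus coincide
and equal the set of elements whose first two coordinates vanish. -/
theorem stmt_8 (p : ℕ) (hp : p.Prime) :
    (∀ a, fpMul p (0, 0, 0, 0, 0, 0) a = a) ∧
    (∀ a, fpMul p a (0, 0, 0, 0, 0, 0) = a) ∧
    (∀ a b, ∃! x, fpMul p a x = b) ∧
    (∀ a b, ∃! y, fpMul p y a = b) ∧
    (∀ a b, fpMul p a b = fpMul p b a) ∧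
    (∀ x y a b u v w,
      fpMul p (fpMul p y x) u = fpMul p y (fpMul p x (fpMul p a b)) →
      fpMul p (fpMul p y x) v = fpMul p y (fpMul p x a) →
      fpMul p (fpMul p y x) w = fpMul p y (fpMul p x b) →
      u = fpMul p v w) ∧
    ({z : FpCarrier p |
        (∀ a, fpMul p z a = fpMul p a z) ∧
        (∀ a b, fpMul p (fpMul p z a) b = fpMul p z (fpMul p a b)) ∧
        (∀ a b, fpMul p (fpMul p a z) b = fpMul p a (fpMul p z b)) ∧
        (∀ a b, fpMul p (fpMul p a b) z = fpMul p a (fpMul p b z))}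
      = {z : FpCarrier p | z.1 = 0 ∧ z.2.1 = 0}) ∧
    ({z : FpCarrier p | ∀ a b, fpMul p (fpMul p z a) b = fpMul p z (fpMul p a b)}
      = {z : FpCarrier p | z.1 = 0 ∧ z.2.1 = 0}) ∧
    ({z : FpCarrier p | ∀ a b, fpMul p (fpMul p a z) b = fpMul p a (fpMul p z b)}
      = {z : FpCarrier p | z.1 = 0 ∧ z.2.1 = 0}) := by
  have : NeZero p := ⟨hp.ne_zero⟩
  refine ⟨zero_fpMul, fpMul_zero, fun a => (fpMul_bijective a).existsUnique, fun a b => ?_,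
    fpMul_comm, ?_, center_eq, leftNucleus_eq, middleNucleus_eq⟩
  · simpa only [fpMul_comm _ a] using (fpMul_bijective a).existsUnique b
  · intro x y a b u v w hu hv hw
    rw [eq_innerMap_of_fpMul_eq hu, eq_innerMap_of_fpMul_eq hv, eq_innerMap_of_fpMul_eq hw,
      innerMap_fpMul]
end
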